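/- If p(z) = Σ_{n≥1} A_n z^n is analytic on the unit disk and subordinate to a convex univalent function q(z) = Σ_{n≥1} C_n z^n (q maps the disk onto a convex domain), then |A_n| ≤ |C_1| for all n ≥ 1. -/

import Mathlib

open Complex Metric

section RogosinskiAux

open Filter Function Set Topology FormalMultilinearSeries

private lemma exists_kth_root {g : ℂ → ℂ} {ζ₀ : ℂ} (hg : AnalyticAt ℂ g ζ₀)
    (hg0 : g ζ₀ ≠ 0) {k : ℕ} (hk : k ≠ 0) :
    ∃ l : ℂ → ℂ, AnalyticAt ℂ l ζ₀ ∧ l ζ₀ ≠ 0 ∧ ∀ᶠ z in 𝓝 ζ₀, (l z) ^ k = g z := by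
  set d : ℂ := (g ζ₀) ^ ((k : ℂ)⁻¹) with hd
  have hdk : d ^ k = g ζ₀ := Complex.cpow_nat_inv_pow _ hk
  have hd0 : d ≠ 0 := by
    intro h
    rw [h, zero_pow hk] at hdk
    exact hg0 hdk.symm
  have hkc : (k : ℂ) ≠ 0 := Nat.cast_ne_zero.mpr hk
  refine ⟨fun z => d * Complex.exp (Complex.log (g z / g ζ₀) / k), ?_, ?_, ?_⟩
  · apply analyticAt_const.mul
    apply analyticAt_cexp.comp
    apply AnalyticAt.div _ analyticAt_const hkc
    apply analyticAt_clog _ |>.comp (hg.div analyticAt_const hg0)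
    simp [div_self hg0, Complex.one_mem_slitPlane]
  · simp [div_self hg0, Complex.log_one, hd0]
  · filter_upwards [hg.continuousAt.eventually_ne hg0] with z hz
    rw [mul_pow, hdk, ← Complex.exp_nat_mul]
    rw [mul_div_cancel₀ _ hkc, Complex.exp_log (div_ne_zero hz hg0)]
    field_simp

private lemma deriv_ne_zero_of_injOn {q : ℂ → ℂ} {s : Set ℂ} (hs : IsOpen s)
    (hq : DifferentiableOn ℂ q s) (hinj : Set.InjOn q s) {z₀ : ℂ} (hz₀ : z₀ ∈ s) :
    deriv q z₀ ≠ 0 := by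
  have hqa : AnalyticAt ℂ q z₀ := hq.analyticAt (hs.mem_nhds hz₀)
  intro h0
  have hfa : AnalyticAt ℂ (fun z => q z - q z₀) z₀ := hqa.sub analyticAt_const
  have hsev : ∀ᶠ z in 𝓝[≠] z₀, z ∈ s :=
    nhdsWithin_le_nhds (hs.eventually_mem hz₀)
  by_cases htop : analyticOrderAt (fun z => q z - q z₀) z₀ = ⊤
  · have hev : ∀ᶠ z in 𝓝[≠] z₀, q z = q z₀ := by
      filter_upwards [nhdsWithin_le_nhds (analyticOrderAt_eq_top.mp htop)] with z hz
      exact sub_eq_zero.mp hz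
    obtain ⟨z, ⟨hz1, hz2⟩, hzne⟩ := ((hev.and hsev).and self_mem_nhdsWithin).exists
    exact hzne (hinj hz2 hz₀ hz1)
  lift analyticOrderAt (fun z => q z - q z₀) z₀ to ℕ using htop with k hk
  obtain ⟨g, hga, hg0, hfg⟩ := hfa.analyticOrderAt_eq_natCast.mp hk.symm
  have hk0 : k ≠ 0 := by
    rintro rfl
    apply hg0
    have := hfg.self_of_nhds
    simpa using this.symm
  have hk1 : k ≠ 1 := by
    rintro rfl
    apply hg0
    have hd1 : HasDerivAt (fun z => (z - z₀) ^ 1 • g z) (g z₀) z₀ := by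
      have h1 : HasDerivAt (fun z : ℂ => z - z₀) 1 z₀ := (hasDerivAt_id z₀).sub_const _
      have h2 : HasDerivAt g (deriv g z₀) z₀ := hga.differentiableAt.hasDerivAt
      have := h1.fun_mul h2
      simp only [pow_one, smul_eq_mul]
      simpa using this
    have hfg' : (fun z => q z - q z₀) =ᶠ[𝓝 z₀] (fun z => (z - z₀) ^ 1 • g z) := hfg
    have e1 : deriv (fun z => q z - q z₀) z₀ = g z₀ := by
      rw [hfg'.deriv_eq]
      exact hd1.deriv
    rw [deriv_sub_const, h0] at e1
    exact e1.symm
  have hk2 : 2 ≤ k := by omega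
  obtain ⟨l, hla, hl0, hlg⟩ := exists_kth_root hga hg0 hk0
  set r : ℂ → ℂ := fun z => (z - z₀) * l z with hr
  have hra : AnalyticAt ℂ r z₀ := (analyticAt_id.sub analyticAt_const).mul hla
  have hrd : HasDerivAt r (l z₀) z₀ := by
    have h1 : HasDerivAt (fun z : ℂ => z - z₀) 1 z₀ := (hasDerivAt_id z₀).sub_const _
    have h2 : HasDerivAt l (deriv l z₀) z₀ := hla.differentiableAt.hasDerivAt
    have := h1.fun_mul h2
    simpa using this
  have hrs : HasStrictDerivAt r (l z₀) z₀ := by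
    obtain ⟨pr, hpr⟩ := hra
    have h1 := hpr.hasStrictDerivAt
    rwa [h1.hasDerivAt.unique hrd] at h1
  have hF := hrs.hasStrictFDerivAt_equiv hl0
  set u := HasStrictFDerivAt.localInverse r _ z₀ hF with hu
  have hr0 : r z₀ = 0 := by simp [hr]
  have hev1 : ∀ᶠ y in 𝓝 (0 : ℂ), r (u y) = y := by
    have := hF.eventually_right_inverse
    rwa [hr0] at this
  have hut : Tendsto u (𝓝 (0 : ℂ)) (𝓝 z₀) := by
    have h2 := hF.localInverse_apply_image
    rw [hr0] at h2
    have h1 := hF.localInverse_continuousAt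
    rw [ContinuousAt, hr0, h2] at h1
    exact h1
  have hEn : ∀ᶠ z in 𝓝 z₀, q z - q z₀ = r z ^ k ∧ z ∈ s := by
    filter_upwards [hfg, hlg, hs.eventually_mem hz₀] with z h1 h2 h3
    refine ⟨?_, h3⟩
    rw [h1, hr]
    rw [mul_pow, h2]
    simp [smul_eq_mul]
  have hu1 : ∀ᶠ y in 𝓝 (0 : ℂ), r (u y) = y ∧ (q (u y) - q z₀ = r (u y) ^ k ∧ u y ∈ s) :=
    hev1.and (hut.eventually hEn)
  set ω : ℂ := Complex.exp (2 * Real.pi * I / k) with hω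
  have hωk : ω ^ k = 1 := by
    rw [hω, ← Complex.exp_nat_mul, mul_div_cancel₀ _ (Nat.cast_ne_zero.mpr hk0)]
    exact Complex.exp_two_pi_mul_I
  have hων : ω ≠ 1 := by
    rw [hω]
    intro h
    obtain ⟨m, hm⟩ := Complex.exp_eq_one_iff.mp h
    rw [div_eq_iff (Nat.cast_ne_zero.mpr hk0)] at hm
    have h2 : (2 * Real.pi * I : ℂ) ≠ 0 := by
      simp [Real.pi_ne_zero, Complex.I_ne_zero]
    have hmk : (1 : ℂ) = m * k := by
      apply mul_left_cancel₀ h2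
      linear_combination hm
    have : (1 : ℤ) = m * k := by exact_mod_cast hmk
    have : (k : ℤ) ∣ 1 := Dvd.intro_left m this.symm
    have := Int.le_of_dvd one_pos this
    omega
  have hmul : Tendsto (fun y : ℂ => ω * y) (𝓝[≠] (0:ℂ)) (𝓝 (0 : ℂ)) := by
    have : Tendsto (fun y : ℂ => ω * y) (𝓝 (0:ℂ)) (𝓝 (ω * 0)) :=
      (continuous_const.mul continuous_id).tendsto 0
    rw [mul_zero] at this
    exact this.mono_left nhdsWithin_le_nhds
  have hbig : ∀ᶠ y in 𝓝[≠] (0:ℂ),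
      (r (u y) = y ∧ (q (u y) - q z₀ = r (u y) ^ k ∧ u y ∈ s)) ∧
      (r (u (ω * y)) = ω * y ∧ (q (u (ω * y)) - q z₀ = r (u (ω * y)) ^ k ∧ u (ω * y) ∈ s)) :=
    (hu1.filter_mono nhdsWithin_le_nhds).and (hmul.eventually hu1)
  obtain ⟨y, ⟨⟨e1, e2, e3⟩, ⟨f1, f2, f3⟩⟩, hy0⟩ := (hbig.and self_mem_nhdsWithin).exists
  have hy0' : y ≠ 0 := hy0
  have hqq : q (u y) = q (u (ω * y)) := by
    rw [e1] at e2
    rw [f1] at f2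
    rw [mul_pow, hωk, one_mul] at f2
    exact sub_left_inj.mp (e2.trans f2.symm)
  have huu : u y = u (ω * y) := hinj e3 f3 hqq
  have : y = ω * y := by
    conv_lhs => rw [← e1]
    conv_rhs => rw [← f1]
    rw [huu]
  have : (ω - 1) * y = 0 := by rw [sub_mul, one_mul, ← this, sub_self]
  rcases mul_eq_zero.mp this with h | h
  · exact hων (sub_eq_zero.mp h)
  · exact hy0' h


private lemma tendsto_div_pow_of_hasFPowerSeriesAt {f : ℂ → ℂ}
    {P : FormalMultilinearSeries ℂ ℂ ℂ} (hf : HasFPowerSeriesAt f P 0) {n : ℕ}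
    (hc : ∀ j, j < n → P.coeff j = 0) :
    Tendsto (fun z => f z / z ^ n) (𝓝[≠] (0:ℂ)) (𝓝 (P.coeff n)) := by
  have hval : ∀ m, (swap dslope 0)^[m] f 0 = P.coeff m := by
    intro m
    have h1 := (hf.has_fpower_series_iterate_dslope_fslope m).coeff_zero 1
    have h2 : P.coeff m = (fslope^[m] P).coeff 0 := by
      rw [FormalMultilinearSeries.coeff_iterate_fslope, zero_add]
    rw [h2]
    exact h1.symm
  have key : ∀ m, m ≤ n → ∀ z : ℂ, z ≠ 0 → (swap dslope 0)^[m] f z = f z / z ^ m := by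
    intro m
    induction m with
    | zero => intro _ z hz; simp
    | succ m ih =>
      intro hm z hz
      have h0 : (swap dslope 0)^[m] f 0 = 0 := by
        rw [hval m]; exact hc m (by omega)
      rw [Function.iterate_succ_apply', swap, dslope_of_ne _ hz, slope_def_field,
        ih (by omega) z hz, h0, pow_succ]
      field_simp
      ring
  have hcont : ContinuousAt ((swap dslope 0)^[n] f) 0 :=
    (hf.has_fpower_series_iterate_dslope_fslope n).continuousAt
  have h2 : Tendsto ((swap dslope 0)^[n] f) (𝓝[≠] (0:ℂ)) (𝓝 (P.coeff n)) := by
    rw [← hval n]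
    exact hcont.tendsto.mono_left nhdsWithin_le_nhds
  apply h2.congr'
  filter_upwards [self_mem_nhdsWithin] with z hz
  exact key n le_rfl z hz

private lemma norm_limit_le_of_maps_ball {f : ℂ → ℂ}
    (hf : DifferentiableOn ℂ f (ball (0:ℂ) 1))
    (hb : ∀ z ∈ ball (0:ℂ) 1, ‖f z‖ ≤ 1) {n : ℕ} {L : ℂ}
    (hl : Tendsto (fun z => f z / z ^ n) (𝓝[≠] (0:ℂ)) (𝓝 L)) : ‖L‖ ≤ 1 := by
  set g : ℂ → ℂ := fun z => f z / z ^ n with hg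
  have hgd : DifferentiableOn ℂ g (ball (0:ℂ) 1 \ {0}) := by
    apply DifferentiableOn.div (hf.mono diff_subset)
    · exact (differentiable_pow n).differentiableOn
    · intro z hz
      exact pow_ne_zero n hz.2
  have ho : (fun z => g z - g 0) =o[𝓝[≠] (0:ℂ)] fun z => (z - 0)⁻¹ := by
    have h1 : Tendsto (fun z => g z - g 0) (𝓝[≠] (0:ℂ)) (𝓝 (L - g 0)) := hl.sub_const _
    refine (h1.isBigO_one ℝ).trans_isLittleO ?_
    simp only [sub_zero]
    rw [Asymptotics.isLittleO_iff]
    intro c hc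
    have hev : ∀ᶠ z : ℂ in 𝓝[≠] (0:ℂ), ‖z‖ < c ∧ z ≠ 0 := by
      refine Filter.Eventually.and ?_ self_mem_nhdsWithin
      refine eventually_nhdsWithin_of_eventually_nhds ?_
      have : Tendsto (fun z : ℂ => ‖z‖) (𝓝 0) (𝓝 0) := by
        simpa using continuous_norm.tendsto (0:ℂ)
      exact this.eventually_lt_const hc
    filter_upwards [hev] with z hz
    have hz0 : 0 < ‖z‖ := norm_pos_iff.mpr hz.2
    rw [norm_inv, norm_one]
    calc (1:ℝ) = ‖z‖ * ‖z‖⁻¹ := (mul_inv_cancel₀ hz0.ne').symm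
    _ ≤ c * ‖z‖⁻¹ := by gcongr; exact hz.1.le
  have hupd := Complex.differentiableOn_update_limUnder_of_isLittleO
      (ball_mem_nhds (0:ℂ) one_pos) hgd ho
  rw [hl.limUnder_eq] at hupd
  set F := Function.update g 0 L with hF
  have hF0 : F 0 = L := Function.update_self _ _ _
  have key : ∀ r : ℝ, 0 < r → r < 1 → ‖L‖ ≤ 1 / r ^ n := by
    intro r hr0 hr1
    have hFd : DiffContOnCl ℂ F (ball (0:ℂ) r) := by
      refine ⟨hupd.mono (ball_subset_ball hr1.le), ?_⟩
      refine hupd.continuousOn.mono ?_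
      rw [closure_ball (0:ℂ) hr0.ne']
      exact (closedBall_subset_ball hr1)
    have hbound : ∀ z ∈ frontier (ball (0:ℂ) r), ‖F z‖ ≤ 1 / r ^ n := by
      intro z hz
      rw [frontier_ball (0:ℂ) hr0.ne'] at hz
      have hzr : ‖z‖ = r := by simpa using hz
      have hz0 : z ≠ 0 := by
        intro h; rw [h] at hzr; simp at hzr; exact hr0.ne' hzr.symm
      have hzb : z ∈ ball (0:ℂ) 1 := by
        simp [mem_ball_zero_iff, hzr, hr1]
      rw [hF, Function.update_of_ne hz0, hg]
      rw [norm_div, norm_pow, hzr]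
      gcongr
      exact hb z hzb
    have := Complex.norm_le_of_forall_mem_frontier_norm_le isBounded_ball hFd hbound
      (by simp [closure_ball (0:ℂ) hr0.ne', hr0.le] :
        (0:ℂ) ∈ closure (ball (0:ℂ) r))
    rwa [hF0] at this
  have ht : Tendsto (fun r : ℝ => 1 / r ^ n) (𝓝[<] (1:ℝ)) (𝓝 1) := by
    have : ContinuousAt (fun r : ℝ => 1 / r ^ n) 1 := by
      apply ContinuousAt.div continuousAt_const (continuousAt_pow _ _)
      norm_num
    have h2 := this.tendsto.mono_left (nhdsWithin_le_nhds (s := Iio (1:ℝ)))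
    simpa using h2
  refine ge_of_tendsto ht ?_
  have h3 : ∀ᶠ r : ℝ in 𝓝[<] (1:ℝ), 0 < r :=
    eventually_nhdsWithin_of_eventually_nhds (eventually_gt_nhds one_pos)
  filter_upwards [h3, self_mem_nhdsWithin] with r h1 h2
  exact key r h1 h2


private lemma sum_pow_root_of_unity {n : ℕ} (hn : n ≠ 0) {ω : ℂ}
    (hω : ω = Complex.exp (2 * Real.pi * I / n)) (j : ℕ) :
    (∑ k ∈ Finset.range n, ω ^ (k * j)) = if n ∣ j then (n : ℂ) else 0 := by
  have hnc : (n : ℂ) ≠ 0 := Nat.cast_ne_zero.mpr hn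
  have hπ : (2 * Real.pi * I : ℂ) ≠ 0 := by
    simp [Real.pi_ne_zero, Complex.I_ne_zero]
  have hωn : ω ^ n = 1 := by
    rw [hω, ← Complex.exp_nat_mul, mul_div_cancel₀ _ hnc]
    exact Complex.exp_two_pi_mul_I
  split_ifs with hdvd
  · obtain ⟨m, rfl⟩ := hdvd
    have : ∀ k ∈ Finset.range n, ω ^ (k * (n * m)) = 1 := by
      intro k _
      rw [show k * (n * m) = n * (k * m) by ring, pow_mul, hωn, one_pow]
    rw [Finset.sum_congr rfl this]
    simp
  · have hωj : ω ^ j ≠ 1 := by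
      intro h
      apply hdvd
      rw [hω, ← Complex.exp_nat_mul] at h
      obtain ⟨m, hm⟩ := Complex.exp_eq_one_iff.mp h
      have h2 : (j : ℂ) = m * n := by
        field_simp [hnc] at hm
        apply mul_left_cancel₀ hπ
        linear_combination (2 * Real.pi * I) * hm
      have h3 : (j : ℤ) = m * n := by exact_mod_cast h2
      exact Int.natCast_dvd_natCast.mp ⟨m, by rw [h3, mul_comm]⟩
    have h1 : ∀ k ∈ Finset.range n, ω ^ (k * j) = (ω ^ j) ^ k := by
      intro k _
      rw [← pow_mul, mul_comm]
    rw [Finset.sum_congr rfl h1, geom_sum_eq hωj, ← pow_mul, mul_comm j n,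
      pow_mul, hωn, one_pow, sub_self, zero_div]

end RogosinskiAux

section Main
open Filter Function Set Topology

theorem rogosinski_convex (p q : ℂ → ℂ)
    (hp : DifferentiableOn ℂ p (ball (0:ℂ) 1))
    (hq : DifferentiableOn ℂ q (ball (0:ℂ) 1))
    (hq_inj : Set.InjOn q (ball (0:ℂ) 1))
    (hq_convex : Convex ℝ (q '' ball (0:ℂ) 1))
    (hp0 : p 0 = 0) (hq0 : q 0 = 0)
    (hsub : ∃ w : ℂ → ℂ, DifferentiableOn ℂ w (ball (0:ℂ) 1) ∧ w 0 = 0 ∧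
      (∀ z ∈ ball (0:ℂ) 1, w z ∈ ball (0:ℂ) 1) ∧
      ∀ z ∈ ball (0:ℂ) 1, p z = q (w z)) :
    ∀ n : ℕ, 1 ≤ n → ‖iteratedDeriv n p 0 / (n.factorial : ℂ)‖ ≤ ‖deriv q 0‖ := by
  intro n hn
  obtain ⟨w₀, hw₀d, hw₀0, hw₀mem, hw₀eq⟩ := hsub
  have hn0 : n ≠ 0 := by omega
  have hnc : (n:ℂ) ≠ 0 := Nat.cast_ne_zero.mpr hn0
  have hnr : (n:ℝ) ≠ 0 := Nat.cast_ne_zero.mpr hn0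
  have h0B : (0:ℂ) ∈ ball (0:ℂ) 1 := by simp
  have hC1 : deriv q 0 ≠ 0 := deriv_ne_zero_of_injOn isOpen_ball hq hq_inj h0B
  set ω : ℂ := Complex.exp (2 * Real.pi * I / n) with hω
  have hωnorm : ∀ k : ℕ, ‖ω ^ k‖ = 1 := by
    intro k
    rw [norm_pow]
    have h1 : 2 * (Real.pi:ℂ) * I / n = ((2 * Real.pi / n : ℝ) : ℂ) * I := by
      push_cast
      ring
    have h2 : ‖ω‖ = 1 := by
      rw [hω, h1, Complex.norm_exp_ofReal_mul_I]
    rw [h2, one_pow]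
  have hmem : ∀ z ∈ ball (0:ℂ) 1, ∀ k : ℕ, ω ^ k * z ∈ ball (0:ℂ) 1 := by
    intro z hz k
    rw [mem_ball_zero_iff] at hz ⊢
    rw [norm_mul, hωnorm k, one_mul]
    exact hz
  set φ : ℂ → ℂ := fun z => (n:ℂ)⁻¹ * ∑ k ∈ Finset.range n, p (ω ^ k * z) with hφ
  have hφd : DifferentiableOn ℂ φ (ball (0:ℂ) 1) := by
    apply DifferentiableOn.const_mul
    apply DifferentiableOn.fun_sum
    intro k _
    exact hp.comp ((differentiable_id.const_mul (ω ^ k)).differentiableOn)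
      (fun z hz => hmem z hz k)
  have hφ0 : φ 0 = 0 := by
    simp [hφ, mul_zero, hp0]
  have hφmem : ∀ z ∈ ball (0:ℂ) 1, φ z ∈ q '' ball (0:ℂ) 1 := by
    intro z hz
    have hrw : φ z = ∑ k ∈ Finset.range n, ((n:ℝ)⁻¹) • q (w₀ (ω ^ k * z)) := by
      show (n:ℂ)⁻¹ * ∑ k ∈ Finset.range n, p (ω ^ k * z) = _
      rw [Finset.mul_sum]
      apply Finset.sum_congr rfl
      intro k _
      rw [hw₀eq _ (hmem z hz k), Complex.real_smul]
      push_cast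
      ring
    rw [hrw]
    apply hq_convex.sum_mem (fun i _ => by positivity)
    · rw [Finset.sum_const, Finset.card_range, nsmul_eq_mul]
      field_simp
    · exact fun i _ => ⟨w₀ (ω ^ i * z), hw₀mem _ (hmem z hz i), rfl⟩
  set w : ℂ → ℂ := fun z => Function.invFunOn q (ball (0:ℂ) 1) (φ z) with hwdef
  have hwael : ∀ z ∈ ball (0:ℂ) 1, w z ∈ ball (0:ℂ) 1 ∧ q (w z) = φ z := by
    intro z hz
    obtain ⟨a, ha, hqa⟩ := hφmem z hz
    exact ⟨Function.invFunOn_mem ⟨a, ha, hqa⟩, Function.invFunOn_eq ⟨a, ha, hqa⟩⟩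
  have hw0 : w 0 = 0 :=
    hq_inj (hwael 0 h0B).1 h0B (by rw [(hwael 0 h0B).2, hφ0, hq0])
  have hwd : ∀ z₀ ∈ ball (0:ℂ) 1, DifferentiableAt ℂ w z₀ := by
    intro z₀ hz₀
    obtain ⟨hwB, hwq⟩ := hwael z₀ hz₀
    have hqa : AnalyticAt ℂ q (w z₀) := hq.analyticAt (isOpen_ball.mem_nhds hwB)
    have hd0 : deriv q (w z₀) ≠ 0 := deriv_ne_zero_of_injOn isOpen_ball hq hq_inj hwB
    obtain ⟨Pq, hPq⟩ := hqa
    have hstrict := hPq.hasStrictDerivAt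
    have hder : (Pq 1 fun _ => 1) ≠ 0 := by rw [← hPq.deriv]; exact hd0
    have hF := hstrict.hasStrictFDerivAt_equiv hder
    set u := HasStrictFDerivAt.localInverse q _ (w z₀) hF with hu
    have hright : ∀ᶠ y in 𝓝 (q (w z₀)), q (u y) = y := hF.eventually_right_inverse
    have huval : u (q (w z₀)) = w z₀ := hF.localInverse_apply_image
    have hucont : ContinuousAt u (q (w z₀)) := hF.localInverse_continuousAt
    have hφc : ContinuousAt φ z₀ :=
      (hφd.differentiableAt (isOpen_ball.mem_nhds hz₀)).continuousAt
    have hφt : Tendsto φ (𝓝 z₀) (𝓝 (q (w z₀))) := by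
      have := hφc.tendsto
      rwa [← hwq] at this
    have h1 : Tendsto (fun z => u (φ z)) (𝓝 z₀) (𝓝 (w z₀)) := by
      have h2 := hucont.tendsto
      rw [huval] at h2
      exact h2.comp hφt
    have hev : w =ᶠ[𝓝 z₀] fun z => u (φ z) := by
      have e1 : ∀ᶠ z in 𝓝 z₀, q (u (φ z)) = φ z := hφt.eventually hright
      have e2 : ∀ᶠ z in 𝓝 z₀, u (φ z) ∈ ball (0:ℂ) 1 :=
        h1.eventually (isOpen_ball.eventually_mem hwB)
      have e3 : ∀ᶠ z in 𝓝 z₀, z ∈ ball (0:ℂ) 1 := isOpen_ball.eventually_mem hz₀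
      filter_upwards [e1, e2, e3] with z f1 f2 f3
      exact hq_inj (hwael z f3).1 f2 (by rw [(hwael z f3).2, f1])
    have hu' : DifferentiableAt ℂ u (q (w z₀)) := hF.to_localInverse.differentiableAt
    have hφ' : DifferentiableAt ℂ φ z₀ := hφd.differentiableAt (isOpen_ball.mem_nhds hz₀)
    have hdiff : DifferentiableAt ℂ (fun z => u (φ z)) z₀ := by
      apply DifferentiableAt.comp
      · rw [hwq] at hu'; exact hu'
      · exact hφ'
    exact hdiff.congr_of_eventuallyEq hev
  have hwd' : DifferentiableOn ℂ w (ball (0:ℂ) 1) :=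
    fun z hz => (hwd z hz).differentiableWithinAt
  -- Taylor series of p
  set A : ℕ → ℂ := fun j => iteratedDeriv j p 0 / (j.factorial : ℂ) with hA
  have hA0 : A 0 = 0 := by simp [hA, hp0]
  have hTaylor : ∀ z ∈ ball (0:ℂ) 1, HasSum (fun j => A j * z ^ j) (p z) := by
    intro z hz
    have h1 := Complex.hasSum_taylorSeries_on_ball hp hz
    have h2 : (fun j => A j * z ^ j) =
        fun j => (j.factorial : ℂ)⁻¹ • (z - 0) ^ j • iteratedDeriv j p 0 := by
      funext j
      simp only [hA, smul_eq_mul, sub_zero, div_eq_mul_inv]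
      ring
    rw [h2]
    exact h1
  set b : ℕ → ℂ := fun j => (n:ℂ)⁻¹ * (∑ k ∈ Finset.range n, ω ^ (k * j)) * A j with hb
  have hblt : ∀ j, j < n → b j = 0 := by
    intro j hj
    rcases Nat.eq_zero_or_pos j with rfl | hj0
    · simp [hb, hA0]
    · have hnd : ¬ n ∣ j := Nat.not_dvd_of_pos_of_lt hj0 hj
      simp only [hb, sum_pow_root_of_unity hn0 hω j, hnd, if_false, mul_zero, zero_mul]
  have hbn : b n = A n := by
    simp only [hb, sum_pow_root_of_unity hn0 hω n, dvd_refl, if_true]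
    field_simp
  have hφsum : ∀ y ∈ ball (0:ℂ) 1, HasSum (fun j => b j * y ^ j) (φ y) := by
    intro y hy
    have h1 : ∀ k ∈ Finset.range n,
        HasSum (fun j => (n:ℂ)⁻¹ * (ω ^ (k * j) * (A j * y ^ j)))
          ((n:ℂ)⁻¹ * p (ω ^ k * y)) := by
      intro k _
      have h2 := (hTaylor (ω ^ k * y) (hmem y hy k)).mul_left ((n:ℂ)⁻¹)
      have h3 : (fun j => (n:ℂ)⁻¹ * (ω ^ (k * j) * (A j * y ^ j))) =
          fun j => (n:ℂ)⁻¹ * (A j * (ω ^ k * y) ^ j) := by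
        funext j
        rw [mul_pow, ← pow_mul]
        ring
      rw [h3]
      exact h2
    have h2 := hasSum_sum h1
    have h3 : (fun j => b j * y ^ j) =
        fun j => ∑ k ∈ Finset.range n, (n:ℂ)⁻¹ * (ω ^ (k * j) * (A j * y ^ j)) := by
      funext j
      simp only [hb]
      rw [← Finset.mul_sum, ← Finset.sum_mul]
      ring
    rw [h3]
    have h4 : φ y = ∑ k ∈ Finset.range n, (n:ℂ)⁻¹ * p (ω ^ k * y) := by
      show (n:ℂ)⁻¹ * ∑ k ∈ Finset.range n, p (ω ^ k * y) = _
      rw [Finset.mul_sum]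
    rw [h4]
    exact h2
  -- power series of φ at 0
  set Q : FormalMultilinearSeries ℂ ℂ ℂ := FormalMultilinearSeries.ofScalars ℂ b with hQ
  have hQnorm : ∀ j, ‖Q j‖ = ‖b j‖ := fun j => by
    exact FormalMultilinearSeries.ofScalars_norm (𝕜 := ℂ) (E := ℂ) (c := b) (n := j)
  have h34 : (((3:ℝ)/4 : ℝ) : ℂ) ∈ ball (0:ℂ) 1 := by
    rw [mem_ball_zero_iff, Complex.norm_real, Real.norm_eq_abs,
      _root_.abs_of_nonneg (by norm_num : (0:ℝ) ≤ (3:ℝ)/4)]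
    norm_num
  have hsummable := (hφsum _ h34).summable
  have htend := hsummable.tendsto_atTop_zero
  obtain ⟨C, hC⟩ := htend.norm.bddAbove_range
  have hCb : ∀ j : ℕ, ‖b j‖ * ((3:ℝ)/4) ^ j ≤ C := by
    intro j
    have h5 := hC (Set.mem_range_self j)
    rwa [norm_mul, norm_pow, Complex.norm_real, Real.norm_eq_abs,
      _root_.abs_of_nonneg (by norm_num : (0:ℝ) ≤ (3:ℝ)/4)] at h5
  have hrad : ((2⁻¹ : NNReal) : ENNReal) ≤ Q.radius := by
    apply Q.le_radius_of_bound C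
    intro j
    rw [hQnorm]
    have hco : ((2⁻¹ : NNReal) : ℝ) = 2⁻¹ := by norm_num
    rw [hco]
    calc ‖b j‖ * (2⁻¹:ℝ) ^ j ≤ ‖b j‖ * ((3:ℝ)/4) ^ j :=
          mul_le_mul_of_nonneg_left
            (pow_le_pow_left₀ (by norm_num) (by norm_num) j) (norm_nonneg _)
    _ ≤ C := hCb j
  have hφps : HasFPowerSeriesAt φ Q 0 := by
    refine ⟨(2⁻¹ : NNReal), hrad, by norm_num, ?_⟩
    intro y hy
    have hy1 : y ∈ ball (0:ℂ) 1 := by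
      rw [mem_emetric_ball_zero_iff] at hy
      rw [mem_ball_zero_iff]
      have h6 : ‖y‖₊ < (2⁻¹ : NNReal) := by exact_mod_cast hy
      have h7 : ‖y‖ < ((2⁻¹ : NNReal) : ℝ) := h6
      calc ‖y‖ < ((2⁻¹ : NNReal) : ℝ) := h7
      _ < 1 := by norm_num
    have h5 := hφsum y hy1
    rw [zero_add]
    have h6 : (fun j => Q j fun _ => y) = fun j => b j * y ^ j := by
      funext j
      simp only [hQ]
      rw [FormalMultilinearSeries.ofScalars_apply_eq, smul_eq_mul]
    rw [h6]
    exact h5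
  have hQcoeff : ∀ j, Q.coeff j = b j := by
    intro j
    have h7 := FormalMultilinearSeries.ofScalars_apply_eq (E := ℂ) b 1 j
    simp only [one_pow, smul_eq_mul, mul_one] at h7
    exact h7
  have hT1 : Tendsto (fun z => φ z / z ^ n) (𝓝[≠] (0:ℂ)) (𝓝 (A n)) := by
    have h7 := tendsto_div_pow_of_hasFPowerSeriesAt hφps
      (fun j hj => by rw [hQcoeff]; exact hblt j hj)
    rwa [hQcoeff, hbn] at h7
  obtain ⟨Pq0, hPq0⟩ : AnalyticAt ℂ q 0 := hq.analyticAt (isOpen_ball.mem_nhds h0B)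
  have hdslc : ContinuousAt (dslope q 0) 0 := hPq0.has_fpower_series_dslope_fslope.continuousAt
  have hfac : ∀ ζ : ℂ, q ζ = ζ * dslope q 0 ζ := by
    intro ζ
    rcases eq_or_ne ζ 0 with rfl | hζ
    · simp [hq0]
    · rw [dslope_of_ne _ hζ, slope_def_field, hq0]
      field_simp
      ring
  have hds0 : dslope q 0 0 = deriv q 0 := dslope_same q 0
  have hwcont : ContinuousAt w 0 := (hwd 0 h0B).continuousAt
  have hhw : Tendsto (fun z => dslope q 0 (w z)) (𝓝 (0:ℂ)) (𝓝 (deriv q 0)) := by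
    have h8 := hdslc.tendsto
    rw [hds0] at h8
    have h9 := hwcont.tendsto
    rw [hw0] at h9
    exact h8.comp h9
  have hne : ∀ᶠ z in 𝓝 (0:ℂ), dslope q 0 (w z) ≠ 0 := hhw.eventually_ne hC1
  have hT2 : Tendsto (fun z => w z / z ^ n) (𝓝[≠] (0:ℂ)) (𝓝 (A n / deriv q 0)) := by
    have h10 : Tendsto (fun z => (φ z / z ^ n) / dslope q 0 (w z)) (𝓝[≠] (0:ℂ))
        (𝓝 (A n / deriv q 0)) := hT1.div (hhw.mono_left nhdsWithin_le_nhds) hC1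
    apply h10.congr'
    have e3 : ∀ᶠ z in 𝓝[≠] (0:ℂ), z ∈ ball (0:ℂ) 1 :=
      nhdsWithin_le_nhds (isOpen_ball.eventually_mem h0B)
    filter_upwards [hne.filter_mono nhdsWithin_le_nhds, e3, self_mem_nhdsWithin]
      with z g1 g2 g3
    have g4 : φ z = w z * dslope q 0 (w z) := by
      rw [← (hwael z g2).2]
      exact hfac (w z)
    have hz0 : z ≠ 0 := g3
    rw [g4]
    field_simp
  have hwb : ∀ z ∈ ball (0:ℂ) 1, ‖w z‖ ≤ 1 :=
    fun z hz => (mem_ball_zero_iff.mp (hwael z hz).1).le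
  have hfinal := norm_limit_le_of_maps_ball hwd' hwb hT2
  rw [norm_div] at hfinal
  exact (div_le_one (norm_pos_iff.mpr hC1)).mp hfinal

end Main
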